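/- Let $\mathcal{E}: [0,1] \to \mathbb{R}$ be $C^1$, let $\lambda$ be a regular value of $\mathcal{E}$ with $M_\lambda = \{m_1, \dots, m_k\}$, and let $u: [0,1] \to \mathbb{C}$ be continuous. Then $\lim_{h \downarrow 0} \frac{1}{h} \int_{\{m \in [0,1] : \lambda < \mathcal{E}(m) \leq \lambda + h\}} u(m)\,dm = \sum_{i : \mathcal{E}'(m_i) > 0,\ m_i < 1} \frac{u(m_i)}{|\mathcal{E}'(m_i)|} + \sum_{i : \mathcal{E}'(m_i) < 0,\ m_i > 0} \frac{u(m_i)}{|\mathcal{E}'(m_i)|}$ (coarea-type limit for the density of states in the toy model). -/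

import Mathlib

open Set MeasureTheory Filter

private lemma mvt_lower (E E' : ℝ → ℝ)
    (hdiff : ∀ m ∈ Icc (0:ℝ) 1, HasDerivWithinAt E (E' m) (Icc (0:ℝ) 1) m)
    {a b C : ℝ} (hab : Icc a b ⊆ Icc (0:ℝ) 1)
    (hlo : ∀ x ∈ Icc a b, C ≤ E' x) :
    ∀ x ∈ Icc a b, ∀ y ∈ Icc a b, x ≤ y → C * (y - x) ≤ E y - E x := by
  have hcont : ContinuousOn E (Icc a b) :=
    fun x hx => ((hdiff x (hab hx)).continuousWithinAt).mono hab
  have hsub : interior (Icc a b) ⊆ interior (Icc (0:ℝ) 1) := interior_mono hab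
  have hderiv : ∀ x ∈ interior (Icc a b), HasDerivAt E (E' x) x := by
    intro x hx
    have hx' : x ∈ interior (Icc (0:ℝ) 1) := hsub hx
    rw [interior_Icc] at hx'
    exact (hdiff x (hab (interior_subset hx))).hasDerivAt (Icc_mem_nhds hx'.1 hx'.2)
  refine Convex.mul_sub_le_image_sub_of_le_deriv (convex_Icc a b) hcont
    (fun x hx => (hderiv x hx).differentiableAt.differentiableWithinAt) ?_
  intro x hx
  rw [(hderiv x hx).deriv]
  exact hlo x (interior_subset hx)

private lemma mvt_upper (E E' : ℝ → ℝ)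
    (hdiff : ∀ m ∈ Icc (0:ℝ) 1, HasDerivWithinAt E (E' m) (Icc (0:ℝ) 1) m)
    {a b C : ℝ} (hab : Icc a b ⊆ Icc (0:ℝ) 1)
    (hhi : ∀ x ∈ Icc a b, E' x ≤ C) :
    ∀ x ∈ Icc a b, ∀ y ∈ Icc a b, x ≤ y → E y - E x ≤ C * (y - x) := by
  have hcont : ContinuousOn E (Icc a b) :=
    fun x hx => ((hdiff x (hab hx)).continuousWithinAt).mono hab
  have hsub : interior (Icc a b) ⊆ interior (Icc (0:ℝ) 1) := interior_mono hab
  have hderiv : ∀ x ∈ interior (Icc a b), HasDerivAt E (E' x) x := by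
    intro x hx
    have hx' : x ∈ interior (Icc (0:ℝ) 1) := hsub hx
    rw [interior_Icc] at hx'
    exact (hdiff x (hab (interior_subset hx))).hasDerivAt (Icc_mem_nhds hx'.1 hx'.2)
  refine Convex.image_sub_le_mul_sub_of_deriv_le (convex_Icc a b) hcont
    (fun x hx => (hderiv x hx).differentiableAt.differentiableWithinAt) ?_
  intro x hx
  rw [(hderiv x hx).deriv]
  exact hhi x (interior_subset hx)

private lemma meas_S (E : ℝ → ℝ) (hE : ContinuousOn E (Icc (0:ℝ) 1)) (a b : ℝ) :
    MeasurableSet {m ∈ Icc (0:ℝ) 1 | a < E m ∧ E m ≤ b} := by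
  have h1 : IsClosed (Icc (0:ℝ) 1 ∩ E ⁻¹' Iic b) :=
    hE.preimage_isClosed_of_isClosed isClosed_Icc isClosed_Iic
  have h2 : IsClosed (Icc (0:ℝ) 1 ∩ E ⁻¹' Iic a) :=
    hE.preimage_isClosed_of_isClosed isClosed_Icc isClosed_Iic
  have heq : {m ∈ Icc (0:ℝ) 1 | a < E m ∧ E m ≤ b}
      = (Icc (0:ℝ) 1 ∩ E ⁻¹' Iic b) \ (Icc (0:ℝ) 1 ∩ E ⁻¹' Iic a) := by
    ext x
    simp only [mem_sep_iff, mem_diff, mem_inter_iff, mem_preimage, mem_Iic]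
    constructor
    · rintro ⟨hx, hlt, hle⟩
      exact ⟨⟨hx, hle⟩, fun h => absurd h.2 (not_le.2 hlt)⟩
    · rintro ⟨⟨hx, hle⟩, hn⟩
      refine ⟨hx, ?_, hle⟩
      by_contra hcon
      exact hn ⟨hx, not_lt.1 hcon⟩
  rw [heq]
  exact h1.measurableSet.diff h2.measurableSet

set_option maxHeartbeats 2000000 in
private lemma local_limit (E E' : ℝ → ℝ) (lam : ℝ) (u : ℝ → ℂ)
    (hdiff : ∀ m ∈ Icc (0:ℝ) 1, HasDerivWithinAt E (E' m) (Icc (0:ℝ) 1) m)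
    (hE'cont : ContinuousOn E' (Icc (0:ℝ) 1))
    (hu : ContinuousOn u (Icc (0:ℝ) 1))
    {m₀ : ℝ} (hm₀ : m₀ ∈ Icc (0:ℝ) 1) (hE0 : E m₀ = lam) (hc : E' m₀ ≠ 0)
    {δ : ℝ} (hδ : 0 < δ)
    (hsign : ∀ x ∈ Icc (0:ℝ) 1 ∩ Icc (m₀-δ) (m₀+δ), |E' x - E' m₀| ≤ |E' m₀|/2)
    (v : ℂ)
    (hv1 : ((0 < E' m₀ ∧ m₀ < 1) ∨ (E' m₀ < 0 ∧ 0 < m₀)) → v = u m₀ / ((|E' m₀| : ℝ) : ℂ))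
    (hv0 : ¬((0 < E' m₀ ∧ m₀ < 1) ∨ (E' m₀ < 0 ∧ 0 < m₀)) → v = 0) :
    Tendsto (fun h : ℝ => (1/h) *
        ∫ m in {m ∈ Icc (0:ℝ) 1 | lam < E m ∧ E m ≤ lam + h} ∩ Ioo (m₀-δ) (m₀+δ), u m)
      (nhdsWithin 0 (Ioi 0)) (nhds v) := by
  have hE : ContinuousOn E (Icc (0:ℝ) 1) := fun m hm => (hdiff m hm).continuousWithinAt
  set A : ℝ → Set ℝ :=
    fun h => {m ∈ Icc (0:ℝ) 1 | lam < E m ∧ E m ≤ lam + h} ∩ Ioo (m₀-δ) (m₀+δ) with hA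
  have hmeasA : ∀ h, MeasurableSet (A h) :=
    fun h => (meas_S E hE lam (lam+h)).inter measurableSet_Ioo
  have hAsub : ∀ h, A h ⊆ Icc (0:ℝ) 1 := fun h x hx => hx.1.1
  have hvolfin : ∀ h, volume (A h) < ⊤ :=
    fun h => lt_of_le_of_lt (measure_mono inter_subset_right) measure_Ioo_lt_top
  have hintu : ∀ h, IntegrableOn u (A h) :=
    fun h => (hu.integrableOn_Icc).mono_set (hAsub h)
  -- D = the basic interval
  set a₀ : ℝ := max 0 (m₀ - δ) with ha₀
  set b₀ : ℝ := min 1 (m₀ + δ) with hb₀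
  have hD : Icc (0:ℝ) 1 ∩ Icc (m₀-δ) (m₀+δ) = Icc a₀ b₀ := Icc_inter_Icc
  have hab01 : Icc a₀ b₀ ⊆ Icc (0:ℝ) 1 := Icc_subset_Icc (le_max_left _ _) (min_le_left _ _)
  have hm₀ab : m₀ ∈ Icc a₀ b₀ :=
    ⟨max_le hm₀.1 (by linarith), le_min hm₀.2 (by linarith)⟩
  have hmemab : ∀ h x, x ∈ A h → x ∈ Icc a₀ b₀ := by
    intro h x hx
    rw [← hD]
    exact ⟨hx.1.1, Ioo_subset_Icc_self hx.2⟩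
  -- general decomposition
  have hdecomp : ∀ h : ℝ, (1/(h:ℂ)) * ∫ m in A h, u m
      = (1/(h:ℂ)) * (∫ m in A h, (u m - u m₀))
        + (((1/h) * (volume (A h)).toReal : ℝ) : ℂ) * u m₀ := by
    intro h
    rw [integral_sub (hintu h) (integrableOn_const (hvolfin h).ne),
      setIntegral_const, Complex.real_smul, measureReal_def]
    push_cast
    ring
  rcases hc.lt_or_gt with hneg | hpos
  · -- case B : E' m₀ < 0
    set cp : ℝ := -(E' m₀) with hcpdef
    have hcppos : 0 < cp := by simp only [hcpdef]; linarith
    have habs : |E' m₀| = cp := abs_of_neg hneg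
    have hcpE : E' m₀ = -cp := by simp [hcpdef]
    clear_value cp
    have hhi2 : ∀ x ∈ Icc a₀ b₀, E' x ≤ -(cp/2) := by
      intro x hx
      have hx' : x ∈ Icc (0:ℝ) 1 ∩ Icc (m₀-δ) (m₀+δ) := by rw [hD]; exact hx
      have := hsign x hx'
      rw [habs] at this
      have := abs_le.1 this
      have h2 := this.2
      simp only [hcpdef] at h2 ⊢
      linarith
    have hMVT0 := mvt_upper E E' hdiff hab01 hhi2
    have hU0 : ∀ h x, x ∈ A h → x < m₀ ∧ cp/2*(m₀ - x) ≤ h := by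
      intro h x hx
      have hxab := hmemab h x hx
      have hlt := hx.1.2.1
      have hle := hx.1.2.2
      have hxm : x < m₀ := by
        by_contra hcon
        push_neg at hcon
        have h2 := hMVT0 m₀ hm₀ab x hxab hcon
        rw [hE0] at h2
        nlinarith
      have h2 := hMVT0 x hxab m₀ hm₀ab hxm.le
      rw [hE0] at h2
      exact ⟨hxm, by nlinarith⟩
    have hU0' : ∀ h, A h ⊆ Ico (m₀ - 2/cp*h) m₀ := by
      intro h x hx
      obtain ⟨h1, h2⟩ := hU0 h x hx
      refine ⟨?_, h1⟩
      rw [sub_le_comm]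
      rw [show (2:ℝ)/cp*h = h/(cp/2) by field_simp, ← sub_nonneg]
      have : m₀ - x ≤ h/(cp/2) := by
        rw [le_div_iff₀ (by linarith)]
        linarith
      linarith
    have hGle : ∀ h, 0 ≤ h → (volume (A h)).toReal ≤ 2/cp*h := by
      intro h hh
      refine ENNReal.toReal_le_of_le_ofReal (by positivity) ?_
      refine (measure_mono (hU0' h)).trans_eq ?_
      rw [Real.volume_Ico]
      congr 1
      ring
    by_cases hm1 : 0 < m₀
    · -- main case B1
      have hveq : v = u m₀ / ((cp:ℝ):ℂ) := by rw [hv1 (Or.inr ⟨hneg, hm1⟩), habs]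
      have hga : Tendsto (fun h => (1/h) * (volume (A h)).toReal)
          (nhdsWithin 0 (Ioi 0)) (nhds (1/cp)) := by
        rw [Metric.tendsto_nhdsWithin_nhds]
        intro ε hε
        set ε₁ : ℝ := min (cp/2) (ε*cp^2/4) with hε₁def
        have hε₁pos : 0 < ε₁ := lt_min (by linarith) (by positivity)
        have hε₁a : ε₁ ≤ cp/2 := min_le_left _ _
        have hε₁b : ε₁ ≤ ε*cp^2/4 := min_le_right _ _
        have hcε : 0 < cp - ε₁ := by linarith
        clear_value ε₁
        obtain ⟨δ₁, hδ₁pos, hδ₁⟩ := Metric.continuousWithinAt_iff.1 (hE'cont m₀ hm₀) ε₁ hε₁pos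
        set r : ℝ := min (min (δ/2) (δ₁/2)) m₀ with hrdef
        have hrpos : 0 < r := lt_min (lt_min (by linarith) (by linarith)) hm1
        have hr1 : r ≤ δ/2 := le_trans (min_le_left _ _) (min_le_left _ _)
        have hr2 : r ≤ δ₁/2 := le_trans (min_le_left _ _) (min_le_right _ _)
        have hr3 : r ≤ m₀ := min_le_right _ _
        have hsubr : Icc (m₀-r) m₀ ⊆ Icc (0:ℝ) 1 := Icc_subset_Icc (by linarith) hm₀.2
        have hE'r : ∀ x ∈ Icc (m₀-r) m₀, -(cp+ε₁) ≤ E' x ∧ E' x ≤ -(cp-ε₁) := by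
          intro x hx
          have hdx : dist x m₀ < δ₁ := by
            rw [Real.dist_eq, abs_lt]
            constructor <;> [linarith [hx.1]; linarith [hx.2]]
          have := hδ₁ (hsubr hx) hdx
          rw [Real.dist_eq] at this
          have := abs_lt.1 this
          have h1 := this.1
          have h2 := this.2
          simp only [hcpdef] at *
          constructor <;> linarith
        have hMVTlo := mvt_lower E E' hdiff hsubr (fun x hx => (hE'r x hx).1)
        have hMVThi := mvt_upper E E' hdiff hsubr (fun x hx => (hE'r x hx).2)
        refine ⟨cp*r/2, by positivity, ?_⟩
        intro h hhmem hdist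
        have hh : 0 < h := hhmem
        rw [Real.dist_eq, sub_zero, abs_of_pos hh] at hdist
        have h2cr : 2/cp*h < r := by
          rw [div_mul_eq_mul_div, div_lt_iff₀ (by positivity)]
          nlinarith [hdist]
        have hm₀r : m₀ ∈ Icc (m₀-r) m₀ := ⟨by linarith, le_refl _⟩
        have hUB : A h ⊆ Ico (m₀ - h/(cp-ε₁)) m₀ := by
          intro x hx
          obtain ⟨hxm, hxr⟩ := hU0 h x hx
          have hxle : m₀ - x ≤ 2/cp*h := by
            rw [show (2:ℝ)/cp*h = h/(cp/2) by field_simp, le_div_iff₀ (by linarith)]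
            linarith
          have hxIcc : x ∈ Icc (m₀-r) m₀ := ⟨by linarith, hxm.le⟩
          have hmvt := hMVThi x hxIcc m₀ hm₀r hxm.le
          rw [hE0] at hmvt
          have hle := hx.1.2.2
          refine ⟨?_, hxm⟩
          rw [sub_le_comm, ← sub_nonneg]
          have : m₀ - x ≤ h/(cp-ε₁) := by
            rw [le_div_iff₀ hcε]
            nlinarith
          linarith
        have hLB : Ico (m₀ - h/(cp+ε₁)) m₀ ⊆ A h := by
          intro x hx
          have hcε' : (0:ℝ) < cp + ε₁ := by linarith
          have hxr : m₀ - x ≤ h/(cp+ε₁) := by linarith [hx.1]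
          have hfr : h/(cp+ε₁) ≤ 2/cp*h := by
            rw [div_le_iff₀ hcε', div_mul_eq_mul_div, div_mul_eq_mul_div, le_div_iff₀ (by positivity)]
            nlinarith
          have hxIcc : x ∈ Icc (m₀-r) m₀ := ⟨by linarith, hx.2.le⟩
          have hlo := hMVTlo x hxIcc m₀ hm₀r hx.2.le
          have hhi := hMVThi x hxIcc m₀ hm₀r hx.2.le
          rw [hE0] at hlo hhi
          have hcx : (cp+ε₁)*(m₀-x) ≤ h := by
            rw [← le_div_iff₀' hcε']
            exact hxr
          refine ⟨⟨hsubr hxIcc, ?_, ?_⟩, ?_, ?_⟩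
          · nlinarith [hx.2]
          · nlinarith
          · have : m₀ - x ≤ r := by linarith
            have : r < δ := by linarith
            linarith [hx.2]
          · linarith [hx.2]
        have hvol_ub : (volume (A h)).toReal ≤ h/(cp-ε₁) := by
          refine ENNReal.toReal_le_of_le_ofReal (by positivity) ?_
          refine (measure_mono hUB).trans_eq ?_
          rw [Real.volume_Ico]
          congr 1
          ring
        have hvol_lb : h/(cp+ε₁) ≤ (volume (A h)).toReal := by
          have hcε' : (0:ℝ) < cp + ε₁ := by linarith
          have h1 : ENNReal.ofReal (h/(cp+ε₁)) ≤ volume (A h) := by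
            have : volume (Ico (m₀ - h/(cp+ε₁)) m₀) ≤ volume (A h) := measure_mono hLB
            rwa [Real.volume_Ico, show m₀ - (m₀ - h/(cp+ε₁)) = h/(cp+ε₁) by ring] at this
          calc h/(cp+ε₁) = (ENNReal.ofReal (h/(cp+ε₁))).toReal :=
                (ENNReal.toReal_ofReal (by positivity)).symm
            _ ≤ _ := ENNReal.toReal_mono (hvolfin h).ne h1
        have hG1 : (1/h) * (volume (A h)).toReal ≤ 1/(cp-ε₁) := by
          have := mul_le_mul_of_nonneg_left hvol_ub (by positivity : (0:ℝ) ≤ 1/h)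
          rwa [show (1/h)*(h/(cp-ε₁)) = 1/(cp-ε₁) by field_simp] at this
        have hG2 : 1/(cp+ε₁) ≤ (1/h) * (volume (A h)).toReal := by
          have hcε' : (0:ℝ) < cp + ε₁ := by linarith
          have := mul_le_mul_of_nonneg_left hvol_lb (by positivity : (0:ℝ) ≤ 1/h)
          rwa [show (1/h)*(h/(cp+ε₁)) = 1/(cp+ε₁) by field_simp] at this
        have k1 : 1/(cp-ε₁) - 1/cp < ε := by
          have heq : 1/(cp-ε₁) - 1/cp = ε₁ / ((cp-ε₁)*cp) := by field_simp; ring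
          rw [heq, div_lt_iff₀ (by positivity)]
          have hq1 : (cp/2)*cp ≤ (cp-ε₁)*cp := mul_le_mul_of_nonneg_right (by linarith) hcppos.le
          have hq2 : ε*((cp/2)*cp) ≤ ε*((cp-ε₁)*cp) := mul_le_mul_of_nonneg_left hq1 hε.le
          nlinarith [hq2, hε₁b]
        have k2 : 1/cp - 1/(cp+ε₁) < ε := by
          have hcε' : (0:ℝ) < cp + ε₁ := by linarith
          have heq : 1/cp - 1/(cp+ε₁) = ε₁ / (cp*(cp+ε₁)) := by field_simp; ring
          rw [heq, div_lt_iff₀ (by positivity)]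
          have hq1 : cp*cp ≤ cp*(cp+ε₁) := mul_le_mul_of_nonneg_left (by linarith) hcppos.le
          have hq2 : ε*(cp*cp) ≤ ε*(cp*(cp+ε₁)) := mul_le_mul_of_nonneg_left hq1 hε.le
          nlinarith [hq2, hε₁b, mul_pos hε (mul_pos hcppos hcppos)]
        rw [Real.dist_eq, abs_sub_lt_iff]
        constructor <;> [linarith; linarith]
      have hgb : Tendsto (fun h : ℝ => (1/(h:ℂ)) * ∫ m in A h, (u m - u m₀))
          (nhdsWithin 0 (Ioi 0)) (nhds 0) := by
        rw [Metric.tendsto_nhdsWithin_nhds]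
        intro ε hε
        set ε₂ : ℝ := ε*cp/8 with hε₂def
        have hε₂pos : 0 < ε₂ := by positivity
        obtain ⟨δu, hδupos, hδu⟩ := Metric.continuousWithinAt_iff.1 (hu m₀ hm₀) ε₂ hε₂pos
        refine ⟨cp*δu/4, by positivity, ?_⟩
        intro h hhmem hdist
        have hh : 0 < h := hhmem
        rw [Real.dist_eq, sub_zero, abs_of_pos hh] at hdist
        have hbound : ∀ x ∈ A h, ‖u x - u m₀‖ ≤ ε₂ := by
          intro x hx
          have hxm := hU0' h hx
          have hdx : dist x m₀ < δu := by
            rw [Real.dist_eq, abs_lt]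
            have h1 : 2/cp*h < δu/2 := by
              rw [div_mul_eq_mul_div, div_lt_iff₀ (by positivity)]
              nlinarith
            constructor
            · linarith [hxm.1]
            · linarith [hxm.2]
          have := hδu (hAsub h hx) hdx
          rw [Complex.dist_eq] at this
          exact this.le
        have hnorm : ‖∫ m in A h, (u m - u m₀)‖ ≤ ε₂ * (volume (A h)).toReal :=
          norm_setIntegral_le_of_norm_le_const_ae' (hvolfin h)
            (Eventually.of_forall hbound)
        rw [dist_zero_right, norm_mul, one_div, norm_inv, Complex.norm_real,
          Real.norm_eq_abs, abs_of_pos hh]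
        have hGh := hGle h hh.le
        have : ‖∫ m in A h, (u m - u m₀)‖ ≤ ε₂ * (2/cp*h) := by
          refine hnorm.trans ?_
          exact mul_le_mul_of_nonneg_left hGh hε₂pos.le
        calc h⁻¹ * ‖∫ m in A h, (u m - u m₀)‖ ≤ h⁻¹ * (ε₂ * (2/cp*h)) := by
              exact mul_le_mul_of_nonneg_left this (by positivity)
          _ = ε/4 := by field_simp; ring
          _ < ε := by linarith
      have hgc : Tendsto (fun h : ℝ => (((1/h) * (volume (A h)).toReal : ℝ) : ℂ) * u m₀)
          (nhdsWithin 0 (Ioi 0)) (nhds (((1/cp : ℝ):ℂ) * u m₀)) :=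
        ((Complex.continuous_ofReal.tendsto _).comp hga).mul_const (u m₀)
      have hsum := hgb.add hgc
      rw [zero_add] at hsum
      have hfin : (((1/cp : ℝ):ℂ) * u m₀) = v := by
        rw [hveq]
        push_cast
        ring
      rw [hfin] at hsum
      exact Tendsto.congr (fun h => (hdecomp h).symm) hsum
    · -- case B2 : m₀ = 0, empty set
      have hm₀0 : m₀ = 0 := le_antisymm (not_lt.1 hm1) hm₀.1
      have hvz : v = 0 := by
        refine hv0 ?_
        rintro (⟨hpos', _⟩ | ⟨_, h⟩)
        · linarith
        · exact hm1 h
      have hempty : ∀ h : ℝ, A h = ∅ := by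
        intro h
        rw [eq_empty_iff_forall_notMem]
        intro x hx
        have h1 := (hU0 h x hx).1
        have h2 := hx.1.1.1
        rw [hm₀0] at h1
        linarith
      have : (fun h : ℝ => (1/(h:ℂ)) * ∫ m in A h, u m) = fun _ => (0:ℂ) := by
        funext h
        rw [hempty h]
        simp
      rw [show (fun h : ℝ => (1/(h:ℂ)) *
          ∫ m in A h, u m) = fun _ => (0:ℂ) from this, hvz]
      exact tendsto_const_nhds
  · -- case A : 0 < E' m₀
    set c := E' m₀ with hcdef
    have habs : |c| = c := abs_of_pos hpos
    have hlo2 : ∀ x ∈ Icc a₀ b₀, c/2 ≤ E' x := by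
      intro x hx
      have hx' : x ∈ Icc (0:ℝ) 1 ∩ Icc (m₀-δ) (m₀+δ) := by rw [hD]; exact hx
      have := hsign x hx'
      rw [habs] at this
      have := abs_le.1 this
      linarith [this.1]
    have hMVT0 := mvt_lower E E' hdiff hab01 hlo2
    have hU0 : ∀ h x, x ∈ A h → m₀ < x ∧ c/2*(x - m₀) ≤ h := by
      intro h x hx
      have hxab := hmemab h x hx
      have hlt := hx.1.2.1
      have hle := hx.1.2.2
      have hxm : m₀ < x := by
        by_contra hcon
        push_neg at hcon
        have h2 := hMVT0 x hxab m₀ hm₀ab hcon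
        rw [hE0] at h2
        nlinarith
      have h2 := hMVT0 m₀ hm₀ab x hxab hxm.le
      rw [hE0] at h2
      exact ⟨hxm, by linarith⟩
    have hU0' : ∀ h, A h ⊆ Ioc m₀ (m₀ + 2/c*h) := by
      intro h x hx
      obtain ⟨h1, h2⟩ := hU0 h x hx
      refine ⟨h1, ?_⟩
      rw [← sub_le_iff_le_add']
      rw [show (2:ℝ)/c*h = h/(c/2) by field_simp, le_div_iff₀ (by linarith)]
      linarith [h2]
    have hGle : ∀ h, 0 ≤ h → (volume (A h)).toReal ≤ 2/c*h := by
      intro h hh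
      refine ENNReal.toReal_le_of_le_ofReal (by positivity) ?_
      refine (measure_mono (hU0' h)).trans_eq ?_
      rw [Real.volume_Ioc]
      congr 1
      ring
    by_cases hm1 : m₀ < 1
    · -- main case A1
      have hveq : v = u m₀ / ((c:ℝ):ℂ) := by rw [hv1 (Or.inl ⟨hpos, hm1⟩), habs]
      -- limit of measures
      have hga : Tendsto (fun h => (1/h) * (volume (A h)).toReal)
          (nhdsWithin 0 (Ioi 0)) (nhds (1/c)) := by
        rw [Metric.tendsto_nhdsWithin_nhds]
        intro ε hε
        set ε₁ : ℝ := min (c/2) (ε*c^2/4) with hε₁def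
        have hε₁pos : 0 < ε₁ := lt_min (by linarith) (by positivity)
        have hε₁a : ε₁ ≤ c/2 := min_le_left _ _
        have hε₁b : ε₁ ≤ ε*c^2/4 := min_le_right _ _
        have hcε : 0 < c - ε₁ := by linarith
        obtain ⟨δ₁, hδ₁pos, hδ₁⟩ := Metric.continuousWithinAt_iff.1 (hE'cont m₀ hm₀) ε₁ hε₁pos
        set r : ℝ := min (min (δ/2) (δ₁/2)) (1 - m₀) with hrdef
        have hrpos : 0 < r := lt_min (lt_min (by linarith) (by linarith)) (by linarith)
        have hr1 : r ≤ δ/2 := le_trans (min_le_left _ _) (min_le_left _ _)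
        have hr2 : r ≤ δ₁/2 := le_trans (min_le_left _ _) (min_le_right _ _)
        have hr3 : r ≤ 1 - m₀ := min_le_right _ _
        have hsubr : Icc m₀ (m₀+r) ⊆ Icc (0:ℝ) 1 := Icc_subset_Icc hm₀.1 (by linarith)
        have hE'r : ∀ x ∈ Icc m₀ (m₀+r), c - ε₁ ≤ E' x ∧ E' x ≤ c + ε₁ := by
          intro x hx
          have hdx : dist x m₀ < δ₁ := by
            rw [Real.dist_eq, abs_lt]
            constructor <;> [linarith [hx.1]; linarith [hx.2]]
          have := hδ₁ (hsubr hx) hdx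
          rw [Real.dist_eq] at this
          have := abs_lt.1 this
          constructor <;> linarith [this.1, this.2]
        have hMVTlo := mvt_lower E E' hdiff hsubr (fun x hx => (hE'r x hx).1)
        have hMVThi := mvt_upper E E' hdiff hsubr (fun x hx => (hE'r x hx).2)
        refine ⟨c*r/2, by positivity, ?_⟩
        intro h hhmem hdist
        have hh : 0 < h := hhmem
        rw [Real.dist_eq, sub_zero, abs_of_pos hh] at hdist
        have h2cr : 2/c*h < r := by
          rw [div_mul_eq_mul_div, div_lt_iff₀ (by positivity)]
          linarith
        have hm₀r : m₀ ∈ Icc m₀ (m₀+r) := ⟨le_refl _, by linarith⟩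
        have hUB : A h ⊆ Ioc m₀ (m₀ + h/(c-ε₁)) := by
          intro x hx
          obtain ⟨hxm, hxr⟩ := hU0 h x hx
          have hxle : x - m₀ ≤ 2/c*h := by
            rw [show (2:ℝ)/c*h = h/(c/2) by field_simp, le_div_iff₀ (by linarith)]
            linarith
          have hxIcc : x ∈ Icc m₀ (m₀+r) := ⟨hxm.le, by linarith⟩
          have hmvt := hMVTlo m₀ hm₀r x hxIcc hxm.le
          rw [hE0] at hmvt
          have hle := hx.1.2.2
          refine ⟨hxm, ?_⟩
          rw [← sub_le_iff_le_add', le_div_iff₀ hcε]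
          nlinarith
        have hLB : Ioc m₀ (m₀ + h/(c+ε₁)) ⊆ A h := by
          intro x hx
          have hcε' : (0:ℝ) < c + ε₁ := by linarith
          have hxr : x - m₀ ≤ h/(c+ε₁) := by linarith [hx.2]
          have hfr : h/(c+ε₁) ≤ 2/c*h := by
            rw [div_le_iff₀ hcε', div_mul_eq_mul_div, div_mul_eq_mul_div, le_div_iff₀ (by positivity)]
            nlinarith
          have hxIcc : x ∈ Icc m₀ (m₀+r) := ⟨hx.1.le, by linarith⟩
          have hlo := hMVTlo m₀ hm₀r x hxIcc hx.1.le
          have hhi := hMVThi m₀ hm₀r x hxIcc hx.1.le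
          rw [hE0] at hlo hhi
          have hcx : (c+ε₁)*(x-m₀) ≤ h := by
            rw [← le_div_iff₀' hcε']
            exact hxr
          refine ⟨⟨hsubr hxIcc, ?_, ?_⟩, ?_, ?_⟩
          · nlinarith [hx.1]
          · linarith
          · linarith [hx.1]
          · have : x - m₀ ≤ r := by linarith
            have : r < δ := by linarith
            linarith [hx.1, hxIcc.2, hr1]
        have hvol_ub : (volume (A h)).toReal ≤ h/(c-ε₁) := by
          refine ENNReal.toReal_le_of_le_ofReal (by positivity) ?_
          refine (measure_mono hUB).trans_eq ?_
          rw [Real.volume_Ioc]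
          congr 1
          ring
        have hvol_lb : h/(c+ε₁) ≤ (volume (A h)).toReal := by
          have hcε' : (0:ℝ) < c + ε₁ := by linarith
          have h1 : ENNReal.ofReal (h/(c+ε₁)) ≤ volume (A h) := by
            have : volume (Ioc m₀ (m₀ + h/(c+ε₁))) ≤ volume (A h) := measure_mono hLB
            rwa [Real.volume_Ioc, show m₀ + h/(c+ε₁) - m₀ = h/(c+ε₁) by ring] at this
          calc h/(c+ε₁) = (ENNReal.ofReal (h/(c+ε₁))).toReal :=
                (ENNReal.toReal_ofReal (by positivity)).symm
            _ ≤ _ := ENNReal.toReal_mono (hvolfin h).ne h1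
        have hG1 : (1/h) * (volume (A h)).toReal ≤ 1/(c-ε₁) := by
          have := mul_le_mul_of_nonneg_left hvol_ub (by positivity : (0:ℝ) ≤ 1/h)
          rwa [show (1/h)*(h/(c-ε₁)) = 1/(c-ε₁) by field_simp] at this
        have hG2 : 1/(c+ε₁) ≤ (1/h) * (volume (A h)).toReal := by
          have hcε' : (0:ℝ) < c + ε₁ := by linarith
          have := mul_le_mul_of_nonneg_left hvol_lb (by positivity : (0:ℝ) ≤ 1/h)
          rwa [show (1/h)*(h/(c+ε₁)) = 1/(c+ε₁) by field_simp] at this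
        have k1 : 1/(c-ε₁) - 1/c < ε := by
          have heq : 1/(c-ε₁) - 1/c = ε₁ / ((c-ε₁)*c) := by field_simp; ring
          rw [heq, div_lt_iff₀ (by positivity)]
          nlinarith
        have k2 : 1/c - 1/(c+ε₁) < ε := by
          have hcε' : (0:ℝ) < c + ε₁ := by linarith
          have heq : 1/c - 1/(c+ε₁) = ε₁ / (c*(c+ε₁)) := by field_simp; ring
          rw [heq, div_lt_iff₀ (by positivity)]
          nlinarith
        rw [Real.dist_eq, abs_sub_lt_iff]
        constructor <;> [linarith; linarith]
      -- limit of oscillation part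
      have hgb : Tendsto (fun h : ℝ => (1/(h:ℂ)) * ∫ m in A h, (u m - u m₀))
          (nhdsWithin 0 (Ioi 0)) (nhds 0) := by
        rw [Metric.tendsto_nhdsWithin_nhds]
        intro ε hε
        set ε₂ : ℝ := ε*c/8 with hε₂def
        have hε₂pos : 0 < ε₂ := by positivity
        obtain ⟨δu, hδupos, hδu⟩ := Metric.continuousWithinAt_iff.1 (hu m₀ hm₀) ε₂ hε₂pos
        refine ⟨c*δu/4, by positivity, ?_⟩
        intro h hhmem hdist
        have hh : 0 < h := hhmem
        rw [Real.dist_eq, sub_zero, abs_of_pos hh] at hdist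
        have hbound : ∀ x ∈ A h, ‖u x - u m₀‖ ≤ ε₂ := by
          intro x hx
          have hxm := hU0' h hx
          have hdx : dist x m₀ < δu := by
            rw [Real.dist_eq, abs_lt]
            have h1 : 2/c*h < δu/2 := by
              rw [div_mul_eq_mul_div, div_lt_iff₀ (by positivity)]
              nlinarith
            constructor
            · linarith [hxm.1]
            · linarith [hxm.2, sub_le_iff_le_add'.2 hxm.2]
          have := hδu (hAsub h hx) hdx
          rw [Complex.dist_eq] at this
          exact this.le
        have hnorm : ‖∫ m in A h, (u m - u m₀)‖ ≤ ε₂ * (volume (A h)).toReal :=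
          norm_setIntegral_le_of_norm_le_const_ae' (hvolfin h)
            (Eventually.of_forall hbound)
        rw [dist_zero_right, norm_mul, one_div, norm_inv, Complex.norm_real,
          Real.norm_eq_abs, abs_of_pos hh]
        have hGh := hGle h hh.le
        have : ‖∫ m in A h, (u m - u m₀)‖ ≤ ε₂ * (2/c*h) := by
          refine hnorm.trans ?_
          exact mul_le_mul_of_nonneg_left hGh hε₂pos.le
        calc h⁻¹ * ‖∫ m in A h, (u m - u m₀)‖ ≤ h⁻¹ * (ε₂ * (2/c*h)) := by
              exact mul_le_mul_of_nonneg_left this (by positivity)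
          _ = ε/4 := by field_simp; ring
          _ < ε := by linarith
      -- combine
      have hgc : Tendsto (fun h : ℝ => (((1/h) * (volume (A h)).toReal : ℝ) : ℂ) * u m₀)
          (nhdsWithin 0 (Ioi 0)) (nhds (((1/c : ℝ):ℂ) * u m₀)) :=
        ((Complex.continuous_ofReal.tendsto _).comp hga).mul_const (u m₀)
      have hsum := hgb.add hgc
      rw [zero_add] at hsum
      have hfin : (((1/c : ℝ):ℂ) * u m₀) = v := by
        rw [hveq]
        push_cast
        ring
      rw [hfin] at hsum
      exact Tendsto.congr (fun h => (hdecomp h).symm) hsum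
    · -- case A2 : m₀ = 1, empty set
      have hm₀1 : m₀ = 1 := le_antisymm hm₀.2 (not_lt.1 hm1)
      have hvz : v = 0 := by
        refine hv0 ?_
        rintro (⟨_, h⟩ | ⟨hneg, _⟩)
        · exact hm1 h
        · linarith
      have hempty : ∀ h : ℝ, A h = ∅ := by
        intro h
        rw [eq_empty_iff_forall_notMem]
        intro x hx
        have h1 := (hU0 h x hx).1
        have h2 := hx.1.1.2
        rw [hm₀1] at h1
        linarith
      have : (fun h : ℝ => (1/(h:ℂ)) * ∫ m in A h, u m) = fun _ => (0:ℂ) := by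
        funext h
        rw [hempty h]
        simp
      rw [show (fun h : ℝ => (1/(h:ℂ)) *
          ∫ m in A h, u m) = fun _ => (0:ℂ) from this, hvz]
      exact tendsto_const_nhds

set_option maxHeartbeats 1000000 in
/-- coarea-type limit for the density of states in the toy model.
If `λ` is a regular value of the `C¹` function `ℰ : [0,1] → ℝ` with level set
`M_λ = {m₁,…,m_k}` and `u` is continuous, then
`(1/h) ∫_{{λ < ℰ ≤ λ+h}} u → ∑_{ℰ'(mᵢ)>0, mᵢ<1} u(mᵢ)/|ℰ'(mᵢ)| + ∑_{ℰ'(mᵢ)<0, mᵢ>0} u(mᵢ)/|ℰ'(mᵢ)|`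
as `h ↓ 0`. -/
theorem stmt3 (E E' : ℝ → ℝ) (lam : ℝ) (u : ℝ → ℂ)
    (hdiff : ∀ m ∈ Icc (0 : ℝ) 1, HasDerivWithinAt E (E' m) (Icc (0 : ℝ) 1) m)
    (hE'cont : ContinuousOn E' (Icc (0 : ℝ) 1))
    (hreg : ∀ m ∈ Icc (0 : ℝ) 1, E m = lam → E' m ≠ 0)
    (hu : ContinuousOn u (Icc (0 : ℝ) 1))
    (M : Finset ℝ) (hM : ∀ m : ℝ, m ∈ M ↔ m ∈ Icc (0 : ℝ) 1 ∧ E m = lam) :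
    Tendsto
      (fun h : ℝ =>
        (1 / h) * ∫ m in {m ∈ Icc (0 : ℝ) 1 | lam < E m ∧ E m ≤ lam + h}, u m)
      (nhdsWithin 0 (Ioi 0))
      (nhds
        ((∑ m ∈ M.filter (fun m => 0 < E' m ∧ m < 1), u m / ((|E' m| : ℝ) : ℂ)) +
          ∑ m ∈ M.filter (fun m => E' m < 0 ∧ 0 < m), u m / ((|E' m| : ℝ) : ℂ))) := by
  classical
  have hE : ContinuousOn E (Icc (0:ℝ) 1) := fun m hm => (hdiff m hm).continuousWithinAt
  set S : ℝ → Set ℝ := fun h => {m ∈ Icc (0:ℝ) 1 | lam < E m ∧ E m ≤ lam + h} with hS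
  -- separation radius
  obtain ⟨δg, hδgpos, hsep⟩ : ∃ δg : ℝ, 0 < δg ∧
      ∀ m ∈ M, ∀ m' ∈ M, m ≠ m' → 2*δg ≤ |m - m'| := by
    by_cases hne : M.offDiag.Nonempty
    · refine ⟨(M.offDiag.inf' hne fun p => |p.1 - p.2|)/2, ?_, ?_⟩
      · have hpos : ∀ p ∈ M.offDiag, 0 < |p.1 - p.2| := by
          intro p hp
          rw [Finset.mem_offDiag] at hp
          exact abs_sub_pos.2 hp.2.2
        have := (Finset.lt_inf'_iff hne).2 hpos
        linarith
      · intro m hm m' hm' hne'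
        have hp : (m, m') ∈ M.offDiag := Finset.mem_offDiag.2 ⟨hm, hm', hne'⟩
        have := Finset.inf'_le (fun p => |p.1 - p.2|) hp
        linarith
    · refine ⟨1, one_pos, fun m hm m' hm' hne' => ?_⟩
      exact absurd ⟨(m, m'), Finset.mem_offDiag.2 ⟨hm, hm', hne'⟩⟩ hne
  -- local radii
  have hchoice : ∀ m ∈ M, ∃ dm : ℝ, 0 < dm ∧ dm ≤ δg ∧
      ∀ x ∈ Icc (0:ℝ) 1 ∩ Icc (m-dm) (m+dm), |E' x - E' m| ≤ |E' m|/2 := by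
    intro m hm
    obtain ⟨hm01, hEm⟩ := (hM m).1 hm
    have hcm : E' m ≠ 0 := hreg m hm01 hEm
    have habs : (0:ℝ) < |E' m|/2 := by positivity
    obtain ⟨δ₁, hδ₁pos, hδ₁⟩ := Metric.continuousWithinAt_iff.1 (hE'cont m hm01) _ habs
    refine ⟨min δg (δ₁/2), lt_min hδgpos (by linarith), min_le_left _ _, ?_⟩
    intro x hx
    have hd2 : min δg (δ₁/2) ≤ δ₁/2 := min_le_right _ _
    have hdx : dist x m < δ₁ := by
      rw [Real.dist_eq, abs_lt]
      have h1 := hx.2.1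
      have h2 := hx.2.2
      constructor <;> linarith
    have := hδ₁ hx.1 hdx
    rw [Real.dist_eq] at this
    exact this.le
  choose! d hd1 hd2 hd3 using hchoice
  -- compactness lemma
  set U : Set ℝ := ⋃ m ∈ M, Ioo (m - d m) (m + d m) with hU
  have hUopen : IsOpen U := isOpen_biUnion (fun m _ => isOpen_Ioo)
  set K : Set ℝ := Icc (0:ℝ) 1 \ U with hK
  have hKcomp : IsCompact K := isCompact_Icc.diff hUopen
  have hKclosed : IsClosed K := by
    rw [hK, diff_eq]
    exact isClosed_Icc.inter (isClosed_compl_iff.2 hUopen)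
  have hKne : ∀ x ∈ K, E x ≠ lam := by
    intro x hx hEx
    have hxM : x ∈ M := (hM x).2 ⟨hx.1, hEx⟩
    refine hx.2 (mem_biUnion hxM ⟨?_, ?_⟩) <;> linarith [hd1 x hxM]
  set K' : Set ℝ := K ∩ E ⁻¹' (Ici lam) with hK'
  have hEK : ContinuousOn E K := hE.mono (fun x hx => hx.1)
  have hK'closed : IsClosed K' := hEK.preimage_isClosed_of_isClosed hKclosed isClosed_Ici
  have hK'comp : IsCompact K' := hKcomp.of_isClosed_subset hK'closed inter_subset_left
  obtain ⟨η₀, hη₀pos, hη₀⟩ : ∃ η₀ : ℝ, 0 < η₀ ∧ ∀ x ∈ K, lam < E x → lam + η₀ ≤ E x := by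
    rcases eq_empty_or_nonempty K' with hemp | hne
    · refine ⟨1, one_pos, fun x hx hlt => ?_⟩
      have : x ∈ K' := ⟨hx, hlt.le⟩
      rw [hemp] at this
      exact absurd this (notMem_empty x)
    · obtain ⟨x₀, hx₀K', hx₀min⟩ :=
        hK'comp.exists_isMinOn hne (hEK.mono inter_subset_left)
      have hgt : lam < E x₀ :=
        lt_of_le_of_ne hx₀K'.2 (Ne.symm (hKne x₀ hx₀K'.1))
      refine ⟨E x₀ - lam, by linarith, fun x hx hlt => ?_⟩
      have hxK' : x ∈ K' := ⟨hx, hlt.le⟩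
      have := (isMinOn_iff.1 hx₀min) x hxK'
      linarith
  have hSsub : ∀ h : ℝ, 0 < h → h < η₀ → S h ⊆ U := by
    intro h hh hhη x hx
    by_contra hxU
    have hxK : x ∈ K := ⟨hx.1, hxU⟩
    have := hη₀ x hxK hx.2.1
    linarith [hx.2.2]
  have hmeasS : ∀ h : ℝ, MeasurableSet (S h) := fun h => meas_S E hE lam (lam+h)
  -- decomposition of the integral
  have heq : ∀ h : ℝ, 0 < h → h < η₀ →
      (1/(h:ℂ)) * ∫ m in S h, u m
        = ∑ m₀ ∈ M, (1/(h:ℂ)) * ∫ m in S h ∩ Ioo (m₀ - d m₀) (m₀ + d m₀), u m := by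
    intro h hh hhη
    have hSU : S h = ⋃ m₀ ∈ M, (S h ∩ Ioo (m₀ - d m₀) (m₀ + d m₀)) := by
      ext x
      constructor
      · intro hx
        obtain ⟨m₀, hm₀M, hxIoo⟩ := mem_iUnion₂.1 (hSsub h hh hhη hx)
        exact mem_iUnion₂.2 ⟨m₀, hm₀M, hx, hxIoo⟩
      · intro hx
        obtain ⟨m₀, hm₀, hx1⟩ := mem_iUnion₂.1 hx
        exact hx1.1
    have hdisj : (↑M : Set ℝ).Pairwise
        (Function.onFun Disjoint (fun m₀ => S h ∩ Ioo (m₀ - d m₀) (m₀ + d m₀))) := by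
      intro a ha b hb hab
      refine Set.disjoint_left.2 fun x hxa hxb => ?_
      have ha' : a ∈ M := ha
      have hb' : b ∈ M := hb
      have h1 := hxa.2.1
      have h2 := hxa.2.2
      have h3 := hxb.2.1
      have h4 := hxb.2.2
      have hda := hd2 a ha'
      have hdb := hd2 b hb'
      have habs : |a - b| < 2*δg := by
        rw [abs_lt]
        constructor <;> linarith
      have := hsep a ha' b hb' hab
      linarith
    have hint : ∫ m in S h, u m
        = ∑ m₀ ∈ M, ∫ m in S h ∩ Ioo (m₀ - d m₀) (m₀ + d m₀), u m := by
      conv_lhs => rw [hSU]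
      exact integral_biUnion_finset M
        (fun i _ => (hmeasS h).inter measurableSet_Ioo) hdisj
        (fun i _ => (hu.integrableOn_Icc).mono_set (fun x hx => hx.1.1))
    rw [hint, Finset.mul_sum]
  -- local limits
  set v : ℝ → ℂ := fun m => if (0 < E' m ∧ m < 1) ∨ (E' m < 0 ∧ 0 < m)
      then u m / ((|E' m| : ℝ):ℂ) else 0 with hv
  have hlim : ∀ m₀ ∈ M, Tendsto
      (fun h : ℝ => (1/(h:ℂ)) * ∫ m in S h ∩ Ioo (m₀ - d m₀) (m₀ + d m₀), u m)
      (nhdsWithin 0 (Ioi 0)) (nhds (v m₀)) := by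
    intro m₀ hm₀M
    obtain ⟨hm01, hEm⟩ := (hM m₀).1 hm₀M
    exact local_limit E E' lam u hdiff hE'cont hu hm01 hEm (hreg m₀ hm01 hEm)
      (hd1 m₀ hm₀M) (hd3 m₀ hm₀M) (v m₀)
      (fun hcase => by rw [hv]; simp only [if_pos hcase])
      (fun hcase => by rw [hv]; simp only [if_neg hcase])
  have hsum := tendsto_finset_sum M hlim
  have hval : ∑ m₀ ∈ M, v m₀
      = (∑ m ∈ M.filter (fun m => 0 < E' m ∧ m < 1), u m / ((|E' m| : ℝ) : ℂ)) +
        ∑ m ∈ M.filter (fun m => E' m < 0 ∧ 0 < m), u m / ((|E' m| : ℝ) : ℂ) := by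
    rw [Finset.sum_filter, Finset.sum_filter, ← Finset.sum_add_distrib]
    refine Finset.sum_congr rfl fun m _ => ?_
    simp only [hv]
    by_cases h1 : 0 < E' m ∧ m < 1
    · rw [if_pos (Or.inl h1), if_pos h1,
        if_neg (by rintro ⟨h2, _⟩; linarith [h1.1]), add_zero]
    · by_cases h2 : E' m < 0 ∧ 0 < m
      · rw [if_pos (Or.inr h2), if_neg h1, if_pos h2, zero_add]
      · rw [if_neg (by rintro (h | h); exacts [h1 h, h2 h]), if_neg h1, if_neg h2, add_zero]
  rw [← hval]
  refine Tendsto.congr' ?_ hsum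
  filter_upwards [Ioo_mem_nhdsGT_of_mem (Set.left_mem_Ico.2 hη₀pos)] with h hh
  exact (heq h hh.1 hh.2).symm
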